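/- Let A and B be non-negative compact contractions on a Hilbert space (or positive semidefinite n×n matrices with A ≤ 𝟙 and B ≤ 𝟙), and let t ∈ (0,1). Define A ⋆_t B = t·A + (1−t)·B + i·√(t(1−t))·[A,B]. Then the largest eigenvalue satisfies λ₁(A ⋆_t B) ≤ t·λ₁(A) + (1−t)·λ₁(B). -/

import Mathlib

set_option linter.unusedTactic false

open Matrix ComplexOrder

/-- Eigenvalues of a Hermitian matrix listed in non-increasing order:
`eigDesc hA j` is the `j`-th largest eigenvalue of `A`. -/
noncomputable def eigDesc {n : ℕ} {A : Matrix (Fin n) (Fin n) ℂ} (hA : A.IsHermitian) :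
    Fin n → ℝ :=
  fun j => hA.eigenvalues (Tuple.sort hA.eigenvalues (Fin.rev j))

/-- The partial-swap convolution `A ⋆_t B = tA + (1-t)B + i√(t(1-t))[A,B]`. -/
noncomputable def pswap {n : ℕ} (t : ℝ) (A B : Matrix (Fin n) (Fin n) ℂ) :
    Matrix (Fin n) (Fin n) ℂ :=
  (t : ℂ) • A + ((1 - t : ℝ) : ℂ) • B
    + (Complex.I * (Real.sqrt (t * (1 - t)) : ℂ)) • (A * B - B * A)

variable {n : ℕ}

lemma star_mul_unit' {A : Matrix (Fin n) (Fin n) ℂ} (hA : A.IsHermitian) :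
    (star hA.eigenvectorUnitary : Matrix (Fin n) (Fin n) ℂ) *
      (hA.eigenvectorUnitary : Matrix (Fin n) (Fin n) ℂ) = 1 :=
  (Matrix.mem_unitaryGroup_iff').mp hA.eigenvectorUnitary.2

/-- spectral representation of `a•1 - A` -/
lemma spectral_sub' {A : Matrix (Fin n) (Fin n) ℂ} (hA : A.IsHermitian) (a : ℝ) :
    (a : ℂ) • (1 : Matrix (Fin n) (Fin n) ℂ) - A =
      (hA.eigenvectorUnitary : Matrix (Fin n) (Fin n) ℂ) *
        diagonal (fun i => ((a - hA.eigenvalues i : ℝ) : ℂ)) *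
        (star hA.eigenvectorUnitary : Matrix (Fin n) (Fin n) ℂ) := by
  set U := (hA.eigenvectorUnitary : Matrix (Fin n) (Fin n) ℂ) with hUdef
  have h1 : (a : ℂ) • (1 : Matrix (Fin n) (Fin n) ℂ) =
      U * diagonal (fun _ => (a : ℂ)) * star U := by
    rw [← smul_one_eq_diagonal, mul_smul_comm, smul_mul_assoc, mul_one,
      (Matrix.mem_unitaryGroup_iff).mp hA.eigenvectorUnitary.2]
  conv_lhs => rw [hA.spectral_theorem, Unitary.conjStarAlgAut_apply, h1]
  rw [← hUdef, ← sub_mul, ← mul_sub, diagonal_sub]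
  congr 2
  ext i
  push_cast
  simp [Function.comp]

/-- conjugation of a nonneg diagonal is PSD -/
lemma conj_psd' {A : Matrix (Fin n) (Fin n) ℂ} (hA : A.IsHermitian) (g : Fin n → ℝ)
    (hg : ∀ i, 0 ≤ g i) :
    ((hA.eigenvectorUnitary : Matrix (Fin n) (Fin n) ℂ) *
      diagonal (fun i => ((g i : ℝ) : ℂ)) *
      (star hA.eigenvectorUnitary : Matrix (Fin n) (Fin n) ℂ)).PosSemidef := by
  rw [show (star hA.eigenvectorUnitary : Matrix (Fin n) (Fin n) ℂ) =
      (hA.eigenvectorUnitary : Matrix (Fin n) (Fin n) ℂ)ᴴ from rfl]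
  exact (Matrix.PosSemidef.diagonal fun i =>
    Complex.zero_le_real.mpr (hg i)).mul_mul_conjTranspose_same _

lemma key1' {A : Matrix (Fin n) (Fin n) ℂ} (hA : A.IsHermitian) (a : ℝ)
    (h1 : ∀ i, hA.eigenvalues i ≤ a) :
    ((a : ℂ) • (1 : Matrix (Fin n) (Fin n) ℂ) - A).PosSemidef := by
  rw [spectral_sub' hA a]
  exact conj_psd' hA _ fun i => sub_nonneg.mpr (h1 i)

lemma key2' {A : Matrix (Fin n) (Fin n) ℂ} (hA : A.IsHermitian) (a t : ℝ) (ht : 0 ≤ t)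
    (h1 : ∀ i, hA.eigenvalues i ≤ a) (h2 : ∀ i, a ≤ hA.eigenvalues i + 1) :
    ((t : ℂ) • (((a : ℂ) • (1 : Matrix (Fin n) (Fin n) ℂ) - A) -
      ((a : ℂ) • (1 : Matrix (Fin n) (Fin n) ℂ) - A) *
      ((a : ℂ) • (1 : Matrix (Fin n) (Fin n) ℂ) - A))).PosSemidef := by
  rw [spectral_sub' hA a]
  set U := (hA.eigenvectorUnitary : Matrix (Fin n) (Fin n) ℂ) with hUdef
  set g : Fin n → ℝ := fun i => a - hA.eigenvalues i with hgdef
  set D := diagonal (fun i => ((g i : ℝ) : ℂ)) with hDdef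
  have hEE : (U * D * star U) * (U * D * star U) = U * (D * D) * star U := by
    simp only [Matrix.mul_assoc]
    rw [← Matrix.mul_assoc (star U) U, star_mul_unit' hA, one_mul]
  rw [hEE]
  have key : (t : ℂ) • (U * D * star U - U * (D * D) * star U) =
      U * diagonal (fun i => ((t * (g i - g i * g i) : ℝ) : ℂ)) * star U := by
    have hd : diagonal (fun i => ((t * (g i - g i * g i) : ℝ) : ℂ)) = (t : ℂ) • (D - D * D) := by
      rw [hDdef, diagonal_mul_diagonal, diagonal_sub, ← diagonal_smul]
      refine congrArg diagonal (funext fun i => ?_)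
      simp only [Pi.smul_apply, smul_eq_mul]
      push_cast
      ring
    rw [hd]
    simp [mul_smul_comm, smul_mul_assoc, Matrix.mul_sub, Matrix.sub_mul, smul_sub]
  rw [key]
  exact conj_psd' hA _ fun i => by
    have h0 : 0 ≤ g i := sub_nonneg.mpr (h1 i)
    have h1' : g i ≤ 1 := by simp only [hgdef]; linarith [h2 i]
    have := mul_nonneg h0 (sub_nonneg.mpr h1')
    nlinarith

lemma eig_le' {M : Matrix (Fin n) (Fin n) ℂ} (hM : M.IsHermitian) (r : ℝ)
    (h : ((r : ℂ) • (1 : Matrix (Fin n) (Fin n) ℂ) - M).PosSemidef) (i : Fin n) :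
    hM.eigenvalues i ≤ r := by
  have hv := hM.mulVec_eigenvectorBasis i
  have h2 := h.dotProduct_mulVec_nonneg ⇑(hM.eigenvectorBasis i)
  have hvv : dotProduct (star ⇑(hM.eigenvectorBasis i)) ⇑(hM.eigenvectorBasis i) = 1 := by
    have hn := hM.eigenvectorBasis.orthonormal.1 i
    have := EuclideanSpace.inner_eq_star_dotProduct (hM.eigenvectorBasis i) (hM.eigenvectorBasis i)
    rw [inner_self_eq_norm_sq_to_K, hn] at this
    rw [dotProduct_comm]; simpa using this.symm
  rw [sub_mulVec, smul_mulVec, one_mulVec, hv, RCLike.real_smul_eq_coe_smul (K := ℂ),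
    dotProduct_sub, dotProduct_smul, dotProduct_smul, hvv] at h2
  simp only [smul_eq_mul, mul_one] at h2
  rw [sub_nonneg] at h2
  exact Complex.real_le_real.mp h2

lemma eigDesc_max [NeZero n] {M : Matrix (Fin n) (Fin n) ℂ} (hM : M.IsHermitian) (i : Fin n) :
    hM.eigenvalues i ≤ eigDesc hM 0 := by
  have hmono := Tuple.monotone_sort hM.eigenvalues
  have hle : (Tuple.sort hM.eigenvalues).symm i ≤ Fin.rev 0 := by
    rw [← Fin.rev_rev ((Tuple.sort hM.eigenvalues).symm i)]
    exact Fin.rev_le_rev.mpr (Fin.zero_le _)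
  have := hmono hle
  simpa [eigDesc, Function.comp] using this

theorem stmt_2 {n : ℕ} [NeZero n] (t : ℝ) (ht : t ∈ Set.Ioo (0 : ℝ) 1)
    (A B : Matrix (Fin n) (Fin n) ℂ)
    (hA : A.PosSemidef) (hB : B.PosSemidef)
    (hA1 : (1 - A).PosSemidef) (hB1 : (1 - B).PosSemidef)
    (hC : (pswap t A B).IsHermitian) :
    eigDesc hC 0 ≤ t * eigDesc hA.isHermitian 0 + (1 - t) * eigDesc hB.isHermitian 0 := by
  obtain ⟨ht0, ht1⟩ := ht
  set a := eigDesc hA.isHermitian 0 with ha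
  set b := eigDesc hB.isHermitian 0 with hb
  have hAle1 : ∀ i, hA.isHermitian.eigenvalues i ≤ 1 := by
    intro i
    refine eig_le' hA.isHermitian 1 ?_ i
    simpa using hA1
  have hBle1 : ∀ i, hB.isHermitian.eigenvalues i ≤ 1 := by
    intro i
    refine eig_le' hB.isHermitian 1 ?_ i
    simpa using hB1
  have hAlea : ∀ i, hA.isHermitian.eigenvalues i ≤ a := fun i => eigDesc_max hA.isHermitian i
  have hBleb : ∀ i, hB.isHermitian.eigenvalues i ≤ b := fun i => eigDesc_max hB.isHermitian i
  have ha1 : a ≤ 1 := hAle1 _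
  have hb1 : b ≤ 1 := hBle1 _
  have hAge : ∀ i, a ≤ hA.isHermitian.eigenvalues i + 1 := fun i => by
    have := hA.eigenvalues_nonneg i; linarith
  have hBge : ∀ i, b ≤ hB.isHermitian.eigenvalues i + 1 := fun i => by
    have := hB.eigenvalues_nonneg i; linarith
  set A' := (a : ℂ) • (1 : Matrix (Fin n) (Fin n) ℂ) - A with hA'
  set B' := (b : ℂ) • (1 : Matrix (Fin n) (Fin n) ℂ) - B with hB'
  set u := (Real.sqrt t : ℂ) with hu
  set w := (Real.sqrt (1 - t) : ℂ) with hw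
  set N := u • A' - (Complex.I * w) • B' with hN
  have hA'H : A'ᴴ = A' := by
    simp [hA', conjTranspose_smul, Complex.star_def, Complex.conj_ofReal, hA.isHermitian.eq]
  have hB'H : B'ᴴ = B' := by
    simp [hB', conjTranspose_smul, Complex.star_def, Complex.conj_ofReal, hB.isHermitian.eq]
  have hNH : Nᴴ = u • A' + (Complex.I * w) • B' := by
    simp [hN, conjTranspose_sub, conjTranspose_smul, hA'H, hB'H, Complex.star_def, _root_.map_mul,
      Complex.conj_I, Complex.conj_ofReal, hu, hw, neg_smul, sub_neg_eq_add]
  have hu2 : u * u = (t : ℂ) := by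
    rw [hu, ← Complex.ofReal_mul, Real.mul_self_sqrt ht0.le]
  have hw2 : w * w = ((1 - t : ℝ) : ℂ) := by
    rw [hw, ← Complex.ofReal_mul, Real.mul_self_sqrt (by linarith)]
  have huw : (Real.sqrt (t * (1 - t)) : ℂ) = u * w := by
    rw [hu, hw, ← Complex.ofReal_mul, Real.sqrt_mul ht0.le]
  have hid : ((t * a + (1 - t) * b : ℝ) : ℂ) • (1 : Matrix (Fin n) (Fin n) ℂ) - pswap t A B
      = Nᴴ * N + (t : ℂ) • (A' - A' * A') + ((1 - t : ℝ) : ℂ) • (B' - B' * B') := by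
    rw [hNH, hN, hA', hB']
    simp only [pswap, huw]
    push_cast
    rw [show (1 : ℂ) - (t : ℂ) = w * w by rw [hw2]; push_cast; ring, ← hu2]
    simp only [Matrix.mul_add, Matrix.add_mul, Matrix.mul_sub, Matrix.sub_mul, smul_mul_assoc,
      mul_smul_comm, smul_sub, smul_add, smul_smul, Matrix.mul_one, Matrix.one_mul, sub_smul,
      add_smul, one_smul]
    match_scalars <;> (try ring1) <;> (ring_nf; rw [Complex.I_sq]; ring1)
  have hP : (((t * a + (1 - t) * b : ℝ) : ℂ) • (1 : Matrix (Fin n) (Fin n) ℂ)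
      - pswap t A B).PosSemidef := by
    rw [hid]
    exact ((posSemidef_conjTranspose_mul_self N).add
      (key2' hA.isHermitian a t ht0.le hAlea hAge)).add
      (key2' hB.isHermitian b (1 - t) (by linarith) hBleb hBge)
  exact eig_le' hC (t * a + (1 - t) * b) hP _
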